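/- Let (α₁, α₂, φ, g) be a metric contact pair with decomposable φ whose curvature vanishes on the vertical subbundle (R_{XY}Z_i = 0 for i = 1,2 and all X, Y), and let ĥ = (1/2)ℒ_{Z₁+Z₂}φ. Then ĥ² = -φ², every nonzero eigenvalue of ĥ is ±1, and rank ĥ = rank φ = 2h+2k. -/

import Mathlib

/-- An abstract algebraic model of a manifold endowed with a contact pair structure
`(α₁, α₂, φ)` with Reeb vector fields `Z₁, Z₂`, a Riemannian metric `g` and its
Levi-Civita connection `nabla`.  Here `F` plays the role of the ring of smooth
functions, `V` of the module of vector fields, `D X f` of the derivative of the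
function `f` along `X`, and `bracket` of the Lie bracket of vector fields. -/
structure ContactPairData (F V : Type*) [Field F] [LinearOrder F] [IsStrictOrderedRing F] [AddCommGroup V] [Module F V] where
  D : V → F → F
  bracket : V → V → V
  g : V → V → F
  nabla : V → V → V
  α₁ : V → F
  α₂ : V → F
  dα₁ : V → V → F
  dα₂ : V → V → F
  Z₁ : V
  Z₂ : V
  φ : V → V
  -- vector fields act on functions as derivations
  D_add : ∀ X f₁ f₂, D X (f₁ + f₂) = D X f₁ + D X f₂
  D_mul : ∀ X f₁ f₂, D X (f₁ * f₂) = f₁ * D X f₂ + D X f₁ * f₂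
  D_add_left : ∀ X Y f, D (X + Y) f = D X f + D Y f
  D_smul_left : ∀ (a : F) (X : V) f, D (a • X) f = a * D X f
  D_bracket : ∀ X Y f, D (bracket X Y) f = D X (D Y f) - D Y (D X f)
  bracket_antisymm : ∀ X Y, bracket X Y = - bracket Y X
  -- the Riemannian metric
  g_symm : ∀ X Y, g X Y = g Y X
  g_add_left : ∀ X Y W, g (X + Y) W = g X W + g Y W
  g_smul_left : ∀ (a : F) (X W : V), g (a • X) W = a * g X W
  g_pos : ∀ X, X ≠ 0 → 0 < g X X
  -- the one-forms of the pair
  α₁_add : ∀ X Y, α₁ (X + Y) = α₁ X + α₁ Y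
  α₁_smul : ∀ (a : F) (X : V), α₁ (a • X) = a * α₁ X
  α₂_add : ∀ X Y, α₂ (X + Y) = α₂ X + α₂ Y
  α₂_smul : ∀ (a : F) (X : V), α₂ (a • X) = a * α₂ X
  -- their exterior derivatives
  dα₁_eq : ∀ X Y, dα₁ X Y = (1/2 : F) * (D X (α₁ Y) - D Y (α₁ X) - α₁ (bracket X Y))
  dα₂_eq : ∀ X Y, dα₂ X Y = (1/2 : F) * (D X (α₂ Y) - D Y (α₂ X) - α₂ (bracket X Y))
  -- the endomorphism field φ of the contact pair structure
  φ_add : ∀ X Y, φ (X + Y) = φ X + φ Y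
  φ_smul : ∀ (a : F) (X : V), φ (a • X) = a • φ X
  φ_sq : ∀ X, φ (φ X) = -X + α₁ X • Z₁ + α₂ X • Z₂
  φ_Z₁ : φ Z₁ = 0
  φ_Z₂ : φ Z₂ = 0
  -- Z₁, Z₂ are the Reeb vector fields of the pair
  α₁_Z₁ : α₁ Z₁ = 1
  α₂_Z₂ : α₂ Z₂ = 1
  α₁_Z₂ : α₁ Z₂ = 0
  α₂_Z₁ : α₂ Z₁ = 0
  dα₁_Z₁ : ∀ X, dα₁ Z₁ X = 0
  dα₁_Z₂ : ∀ X, dα₁ Z₂ X = 0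
  dα₂_Z₁ : ∀ X, dα₂ Z₁ X = 0
  dα₂_Z₂ : ∀ X, dα₂ Z₂ X = 0
  -- nabla is the Levi-Civita connection of g
  nabla_add_left : ∀ X Y W, nabla (X + Y) W = nabla X W + nabla Y W
  nabla_smul_left : ∀ (a : F) (X W : V), nabla (a • X) W = a • nabla X W
  nabla_add_right : ∀ X Y W, nabla X (Y + W) = nabla X Y + nabla X W
  nabla_leibniz : ∀ (X : V) (a : F) (Y : V), nabla X (a • Y) = D X a • Y + a • nabla X Y
  nabla_compat : ∀ X Y W, D X (g Y W) = g (nabla X Y) W + g Y (nabla X W)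
  nabla_torsion_free : ∀ X Y, nabla X Y - nabla Y X = bracket X Y

namespace ContactPairData

variable {F V : Type*} [Field F] [LinearOrder F] [IsStrictOrderedRing F] [AddCommGroup V] [Module F V]
variable (P : ContactPairData F V)

/-- `g` is a metric compatible with the contact pair structure. -/
def Compatible : Prop :=
  ∀ X Y, P.g (P.φ X) (P.φ Y) = P.g X Y - P.α₁ X * P.α₁ Y - P.α₂ X * P.α₂ Y

/-- `g` is a metric associated to the contact pair structure, i.e. the data is a
metric contact pair. -/
def Associated : Prop :=
  (∀ X Y, P.g X (P.φ Y) = P.dα₁ X Y + P.dα₂ X Y) ∧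
  (∀ X, P.g X P.Z₁ = P.α₁ X) ∧ (∀ X, P.g X P.Z₂ = P.α₂ X)

/-- `φ` is decomposable: it preserves the tangent bundles
`T𝓕ᵢ = ker αᵢ ∩ ker dαᵢ` of the two characteristic foliations. -/
def Decomposable : Prop :=
  (∀ X, P.α₁ X = 0 → (∀ Y, P.dα₁ X Y = 0) →
    P.α₁ (P.φ X) = 0 ∧ ∀ Y, P.dα₁ (P.φ X) Y = 0) ∧
  (∀ X, P.α₂ X = 0 → (∀ Y, P.dα₂ X Y = 0) →
    P.α₂ (P.φ X) = 0 ∧ ∀ Y, P.dα₂ (P.φ X) Y = 0)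

/-- `Z = Z₁ + Z₂`, the sum of the two Reeb vector fields. -/
def Z : V := P.Z₁ + P.Z₂

/-- The Lie derivative `(ℒ_W φ) X`. -/
def lieφ (W X : V) : V := P.bracket W (P.φ X) - P.φ (P.bracket W X)

/-- The tensor `ĥ = (1/2) ℒ_Z φ`. -/
def hh (X : V) : V := (1/2 : F) • P.lieφ P.Z X

/-- The Riemann curvature `R_{X Y} W = ∇_X ∇_Y W - ∇_Y ∇_X W - ∇_{[X,Y]} W`. -/
def R (X Y W : V) : V :=
  P.nabla X (P.nabla Y W) - P.nabla Y (P.nabla X W) - P.nabla (P.bracket X Y) W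

/-- `Z = Z₁ + Z₂` is a Killing vector field. -/
def Killing : Prop := ∀ X Y, P.g (P.nabla X P.Z) Y + P.g (P.nabla Y P.Z) X = 0

/-- A vector field is horizontal when it lies in `ker α₁ ∩ ker α₂`. -/
def Horizontal (X : V) : Prop := P.α₁ X = 0 ∧ P.α₂ X = 0

end ContactPairData

namespace MCPAux

section

variable {F V : Type*} [Field F] [LinearOrder F] [IsStrictOrderedRing F] [AddCommGroup V] [Module F V]
variable (P : ContactPairData F V)

/-! ### Basic linearity lemmas -/

lemma D_zero (X : V) : P.D X (0:F) = 0 := by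
  have h := P.D_add X 0 0
  simp only [add_zero] at h
  linarith

lemma D_one (X : V) : P.D X (1:F) = 0 := by
  have h := P.D_mul X 1 1
  simp only [mul_one, one_mul] at h
  linarith

lemma D_neg (X : V) (f : F) : P.D X (-f) = -P.D X f := by
  have h := P.D_add X f (-f)
  simp only [add_neg_cancel, D_zero] at h
  linarith

lemma D_two (X : V) : P.D X (2:F) = 0 := by
  have h := P.D_add X 1 1
  rw [D_one] at h
  norm_num at h
  exact h

lemma g_add_right (X Y W : V) : P.g X (Y + W) = P.g X Y + P.g X W := by
  rw [P.g_symm, P.g_add_left, P.g_symm Y, P.g_symm W]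

lemma g_smul_right (a : F) (X W : V) : P.g X (a • W) = a * P.g X W := by
  rw [P.g_symm, P.g_smul_left, P.g_symm]

lemma g_zero_left (W : V) : P.g 0 W = 0 := by
  have := P.g_smul_left 0 0 W
  simpa using this

lemma g_zero_right (X : V) : P.g X 0 = 0 := by
  rw [P.g_symm]; exact g_zero_left P X

lemma g_neg_left (X W : V) : P.g (-X) W = -P.g X W := by
  have := P.g_smul_left (-1) X W
  simpa using this

lemma g_neg_right (X W : V) : P.g X (-W) = -P.g X W := by
  rw [P.g_symm, g_neg_left, P.g_symm]

lemma g_sub_left (X Y W : V) : P.g (X - Y) W = P.g X W - P.g Y W := by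
  rw [sub_eq_add_neg, P.g_add_left, g_neg_left, sub_eq_add_neg]

lemma g_sub_right (X Y W : V) : P.g X (Y - W) = P.g X Y - P.g X W := by
  rw [P.g_symm, g_sub_left, P.g_symm, P.g_symm W]

lemma α₁_zero : P.α₁ 0 = 0 := by
  have := P.α₁_smul 0 0; simpa using this

lemma α₂_zero : P.α₂ 0 = 0 := by
  have := P.α₂_smul 0 0; simpa using this

lemma α₁_neg (X : V) : P.α₁ (-X) = -P.α₁ X := by
  have := P.α₁_smul (-1) X; simpa using this

lemma α₂_neg (X : V) : P.α₂ (-X) = -P.α₂ X := by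
  have := P.α₂_smul (-1) X; simpa using this

lemma α₁_sub (X Y : V) : P.α₁ (X - Y) = P.α₁ X - P.α₁ Y := by
  rw [sub_eq_add_neg, P.α₁_add, α₁_neg, sub_eq_add_neg]

lemma α₂_sub (X Y : V) : P.α₂ (X - Y) = P.α₂ X - P.α₂ Y := by
  rw [sub_eq_add_neg, P.α₂_add, α₂_neg, sub_eq_add_neg]

lemma φ_zero : P.φ 0 = 0 := by
  have := P.φ_smul 0 0; simpa using this

lemma φ_neg (X : V) : P.φ (-X) = -P.φ X := by
  have := P.φ_smul (-1) X; simpa using this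

lemma φ_sub (X Y : V) : P.φ (X - Y) = P.φ X - P.φ Y := by
  rw [sub_eq_add_neg, P.φ_add, φ_neg, sub_eq_add_neg]

lemma D_negone (X : V) : P.D X (-1 : F) = 0 := by
  rw [D_neg, D_one, neg_zero]

lemma nabla_zero_right (X : V) : P.nabla X 0 = 0 := by
  have := P.nabla_leibniz X 0 0
  simpa using this

lemma nabla_neg_right (X Y : V) : P.nabla X (-Y) = -P.nabla X Y := by
  have := P.nabla_leibniz X (-1) Y
  simpa [D_negone] using this

lemma nabla_sub_right (X Y W : V) : P.nabla X (Y - W) = P.nabla X Y - P.nabla X W := by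
  rw [sub_eq_add_neg, P.nabla_add_right, nabla_neg_right, sub_eq_add_neg]

lemma nabla_zero_left (W : V) : P.nabla 0 W = 0 := by
  have := P.nabla_smul_left 0 0 W
  simpa using this

lemma nabla_neg_left (X W : V) : P.nabla (-X) W = -P.nabla X W := by
  have := P.nabla_smul_left (-1) X W
  simpa using this

lemma nabla_sub_left (X Y W : V) : P.nabla (X - Y) W = P.nabla X W - P.nabla Y W := by
  rw [sub_eq_add_neg, P.nabla_add_left, nabla_neg_left, sub_eq_add_neg]

end

end MCPAux

namespace MCPAux

section

variable {F V : Type*} [Field F] [LinearOrder F] [IsStrictOrderedRing F] [AddCommGroup V] [Module F V]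
variable (P : ContactPairData F V)

/-! ### Lemmas using the associated metric -/

lemma dα₁_antisymm (X Y : V) : P.dα₁ X Y = -P.dα₁ Y X := by
  rw [P.dα₁_eq, P.dα₁_eq, P.bracket_antisymm Y X, α₁_neg]
  ring

lemma dα₂_antisymm (X Y : V) : P.dα₂ X Y = -P.dα₂ Y X := by
  rw [P.dα₂_eq, P.dα₂_eq, P.bracket_antisymm Y X, α₂_neg]
  ring

lemma gφ (ha : P.Associated) (X Y : V) : P.g X (P.φ Y) = P.dα₁ X Y + P.dα₂ X Y := ha.1 X Y

lemma gZ1 (ha : P.Associated) (X : V) : P.g X P.Z₁ = P.α₁ X := ha.2.1 X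

lemma gZ2 (ha : P.Associated) (X : V) : P.g X P.Z₂ = P.α₂ X := ha.2.2 X

lemma gZ1' (ha : P.Associated) (X : V) : P.g P.Z₁ X = P.α₁ X := by rw [P.g_symm]; exact gZ1 P ha X

lemma gZ2' (ha : P.Associated) (X : V) : P.g P.Z₂ X = P.α₂ X := by rw [P.g_symm]; exact gZ2 P ha X

lemma φ_skew (ha : P.Associated) (X Y : V) : P.g (P.φ X) Y = -P.g X (P.φ Y) := by
  rw [P.g_symm, gφ P ha, gφ P ha, dα₁_antisymm, dα₂_antisymm]
  ring

lemma α₁φ (ha : P.Associated) (X : V) : P.α₁ (P.φ X) = 0 := by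
  rw [← gZ1 P ha, φ_skew P ha, P.φ_Z₁, g_zero_right, neg_zero]

lemma α₂φ (ha : P.Associated) (X : V) : P.α₂ (P.φ X) = 0 := by
  rw [← gZ2 P ha, φ_skew P ha, P.φ_Z₂, g_zero_right, neg_zero]

lemma gφZ1 (ha : P.Associated) (X : V) : P.g (P.φ X) P.Z₁ = 0 := by
  rw [gZ1 P ha]; exact α₁φ P ha X

lemma gφZ2 (ha : P.Associated) (X : V) : P.g (P.φ X) P.Z₂ = 0 := by
  rw [gZ2 P ha]; exact α₂φ P ha X

lemma φZ : P.φ P.Z = 0 := by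
  rw [ContactPairData.Z, P.φ_add, P.φ_Z₁, P.φ_Z₂, add_zero]

lemma α₁Z : P.α₁ P.Z = 1 := by
  rw [ContactPairData.Z, P.α₁_add, P.α₁_Z₁, P.α₁_Z₂, add_zero]

lemma α₂Z : P.α₂ P.Z = 1 := by
  rw [ContactPairData.Z, P.α₂_add, P.α₂_Z₁, P.α₂_Z₂, zero_add]

lemma gXZ (ha : P.Associated) (X : V) : P.g X P.Z = P.α₁ X + P.α₂ X := by
  rw [ContactPairData.Z, g_add_right, gZ1 P ha, gZ2 P ha]

lemma gZZ (ha : P.Associated) : P.g P.Z P.Z = 2 := by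
  rw [gXZ P ha, α₁Z, α₂Z]; norm_num

/-- a vector killed by `φ` is vertical -/
lemma vert (ha : P.Associated) (X : V) (h : P.φ X = 0) : X = P.α₁ X • P.Z₁ + P.α₂ X • P.Z₂ := by
  have h2 := P.φ_sq X
  rw [h, φ_zero] at h2
  have h3 : P.α₁ X • P.Z₁ + P.α₂ X • P.Z₂ - X = 0 := by rw [← h2.symm]; abel
  exact (sub_eq_zero.mp h3).symm

lemma φφZ₁ : P.φ (P.φ P.Z₁) = 0 := by
  rw [P.φ_Z₁, φ_zero]

lemma φφZ₂ : P.φ (P.φ P.Z₂) = 0 := by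
  rw [P.φ_Z₂, φ_zero]

/-- `g(U, φ(φW))` expansion -/
lemma g_phiphi_right (U W : V) :
    P.g U (P.φ (P.φ W)) = -P.g U W + P.α₁ W * P.g U P.Z₁ + P.α₂ W * P.g U P.Z₂ := by
  rw [P.φ_sq W, g_add_right, g_add_right, g_neg_right, g_smul_right, g_smul_right]

lemma g_phiphi_left (U W : V) :
    P.g (P.φ (P.φ W)) U = -P.g W U + P.α₁ W * P.g P.Z₁ U + P.α₂ W * P.g P.Z₂ U := by
  rw [P.g_symm, g_phiphi_right, P.g_symm U W, P.g_symm U P.Z₁, P.g_symm U P.Z₂]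

end

end MCPAux

namespace MCPAux

section

variable {F V : Type*} [Field F] [LinearOrder F] [IsStrictOrderedRing F] [AddCommGroup V] [Module F V]
variable (P : ContactPairData F V)

/-! ### The operators `A = ∇Z`, `S`, `Q = ∇_Z φ`, `Sp = ∇_Z S` -/

def A (X : V) : V := P.nabla X P.Z

def S (X : V) : V := A P X + P.φ X

def Q (X : V) : V := P.nabla P.Z (P.φ X) - P.φ (P.nabla P.Z X)

def Sp (X : V) : V := P.nabla P.Z (S P X) - S P (P.nabla P.Z X)

lemma A_def (X : V) : A P X = P.nabla X P.Z := rfl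

lemma A_add (X Y : V) : A P (X + Y) = A P X + A P Y := P.nabla_add_left X Y P.Z

lemma A_smul (a : F) (X : V) : A P (a • X) = a • A P X := P.nabla_smul_left a X P.Z

lemma A_zero : A P 0 = 0 := nabla_zero_left P P.Z

lemma A_sub (X Y : V) : A P (X - Y) = A P X - A P Y := nabla_sub_left P X Y P.Z

lemma S_add (X Y : V) : S P (X + Y) = S P X + S P Y := by
  unfold S; rw [A_add, P.φ_add]; abel

lemma S_smul (a : F) (X : V) : S P (a • X) = a • S P X := by
  unfold S; rw [A_smul, P.φ_smul, smul_add]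

lemma S_zero : S P 0 = 0 := by
  unfold S; rw [A_zero, φ_zero, add_zero]

lemma S_sub (X Y : V) : S P (X - Y) = S P X - S P Y := by
  unfold S; rw [A_sub, φ_sub]; abel

lemma A_neg (X : V) : A P (-X) = -A P X := by
  rw [← neg_one_smul F X, A_smul, neg_one_smul]

lemma S_neg (X : V) : S P (-X) = -S P X := by
  unfold S; rw [A_neg, φ_neg]; abel

/-- The fundamental relation `g(Y, AX) - g(X, AY) = 2 g(X, φY)`. -/
lemma two_dα (ha : P.Associated) (X Y : V) :
    P.g Y (A P X) - P.g X (A P Y) = 2 * P.g X (P.φ Y) := by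
  have hb : P.bracket X Y = P.nabla X Y - P.nabla Y X := (P.nabla_torsion_free X Y).symm
  have hgb : P.α₁ (P.bracket X Y) + P.α₂ (P.bracket X Y)
      = P.g (P.nabla X Y) P.Z - P.g (P.nabla Y X) P.Z := by
    rw [← gXZ P ha, hb, g_sub_left]
  have hX : P.D X (P.α₁ Y) + P.D X (P.α₂ Y)
      = P.g (P.nabla X Y) P.Z + P.g Y (A P X) := by
    calc P.D X (P.α₁ Y) + P.D X (P.α₂ Y) = P.D X (P.α₁ Y + P.α₂ Y) := (P.D_add X _ _).symm
    _ = P.D X (P.g Y P.Z) := congrArg (P.D X) (gXZ P ha Y).symm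
    _ = P.g (P.nabla X Y) P.Z + P.g Y (A P X) := P.nabla_compat X Y P.Z
  have hY : P.D Y (P.α₁ X) + P.D Y (P.α₂ X)
      = P.g (P.nabla Y X) P.Z + P.g X (A P Y) := by
    calc P.D Y (P.α₁ X) + P.D Y (P.α₂ X) = P.D Y (P.α₁ X + P.α₂ X) := (P.D_add Y _ _).symm
    _ = P.D Y (P.g X P.Z) := congrArg (P.D Y) (gXZ P ha X).symm
    _ = P.g (P.nabla Y X) P.Z + P.g X (A P Y) := P.nabla_compat Y X P.Z
  have e1 := P.dα₁_eq X Y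
  have e2 := P.dα₂_eq X Y
  have hφ := gφ P ha X Y
  linear_combination (-2:F)*hφ - 2*e1 - 2*e2 - hX + hY + hgb

/-- The analogue for `Z₁` alone. -/
lemma two_dα₁ (ha : P.Associated) (X Y : V) :
    P.g Y (P.nabla X P.Z₁) - P.g X (P.nabla Y P.Z₁) = 2 * P.dα₁ X Y := by
  have hb : P.bracket X Y = P.nabla X Y - P.nabla Y X := (P.nabla_torsion_free X Y).symm
  have hgb : P.α₁ (P.bracket X Y)
      = P.g (P.nabla X Y) P.Z₁ - P.g (P.nabla Y X) P.Z₁ := by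
    rw [← gZ1 P ha, hb, g_sub_left]
  have hX : P.D X (P.α₁ Y) = P.g (P.nabla X Y) P.Z₁ + P.g Y (P.nabla X P.Z₁) := by
    calc P.D X (P.α₁ Y) = P.D X (P.g Y P.Z₁) := congrArg (P.D X) (gZ1 P ha Y).symm
    _ = _ := P.nabla_compat X Y P.Z₁
  have hY : P.D Y (P.α₁ X) = P.g (P.nabla Y X) P.Z₁ + P.g X (P.nabla Y P.Z₁) := by
    calc P.D Y (P.α₁ X) = P.D Y (P.g X P.Z₁) := congrArg (P.D Y) (gZ1 P ha X).symm
    _ = _ := P.nabla_compat Y X P.Z₁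
  have e1 := P.dα₁_eq X Y
  linear_combination (-2:F)*e1 - hX + hY + hgb

lemma two_dα₂ (ha : P.Associated) (X Y : V) :
    P.g Y (P.nabla X P.Z₂) - P.g X (P.nabla Y P.Z₂) = 2 * P.dα₂ X Y := by
  have hb : P.bracket X Y = P.nabla X Y - P.nabla Y X := (P.nabla_torsion_free X Y).symm
  have hgb : P.α₂ (P.bracket X Y)
      = P.g (P.nabla X Y) P.Z₂ - P.g (P.nabla Y X) P.Z₂ := by
    rw [← gZ2 P ha, hb, g_sub_left]
  have hX : P.D X (P.α₂ Y) = P.g (P.nabla X Y) P.Z₂ + P.g Y (P.nabla X P.Z₂) := by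
    calc P.D X (P.α₂ Y) = P.D X (P.g Y P.Z₂) := congrArg (P.D X) (gZ2 P ha Y).symm
    _ = _ := P.nabla_compat X Y P.Z₂
  have hY : P.D Y (P.α₂ X) = P.g (P.nabla Y X) P.Z₂ + P.g X (P.nabla Y P.Z₂) := by
    calc P.D Y (P.α₂ X) = P.D Y (P.g X P.Z₂) := congrArg (P.D Y) (gZ2 P ha X).symm
    _ = _ := P.nabla_compat Y X P.Z₂
  have e2 := P.dα₂_eq X Y
  linear_combination (-2:F)*e2 - hX + hY + hgb

/-- `S` is symmetric. -/
lemma S_symm (ha : P.Associated) (X Y : V) : P.g (S P X) Y = P.g (S P Y) X := by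
  have h1 := two_dα P ha X Y
  have h2 : P.g (P.φ X) Y = -P.g X (P.φ Y) := φ_skew P ha X Y
  have h3 : P.g Y (A P X) = P.g (A P X) Y := P.g_symm _ _
  have h4 : P.g X (A P Y) = P.g (A P Y) X := P.g_symm _ _
  have h5 : P.g (P.φ Y) X = P.g X (P.φ Y) := P.g_symm _ _
  unfold S
  rw [P.g_add_left, P.g_add_left]
  linear_combination h1 + h2 - h3 + h4 - h5

lemma gAZ (ha : P.Associated) (X : V) : P.g (A P X) P.Z = 0 := by
  have h := P.nabla_compat X P.Z P.Z
  have h2 : P.D X (P.g P.Z P.Z) = 0 := by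
    rw [gZZ P ha]; exact D_two P X
  rw [h2, ← A_def, P.g_symm P.Z (A P X)] at h
  linarith

end

end MCPAux

namespace MCPAux

section

variable {F V : Type*} [Field F] [LinearOrder F] [IsStrictOrderedRing F] [AddCommGroup V] [Module F V]
variable (P : ContactPairData F V)

lemma gφZ (ha : P.Associated) (X : V) : P.g (P.φ X) P.Z = 0 := by
  rw [ContactPairData.Z, g_add_right, gφZ1 P ha, gφZ2 P ha, add_zero]

lemma AZ_zero (ha : P.Associated) (hnd : ∀ X : V, (∀ W, P.g X W = 0) → X = 0) :
    A P P.Z = 0 := by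
  apply hnd
  intro W
  have h := two_dα P ha P.Z W
  have h2 : P.g P.Z (P.φ W) = 0 := by
    rw [P.g_symm]; exact gφZ P ha W
  have h3 : P.g P.Z (A P W) = 0 := by
    rw [P.g_symm]; exact gAZ P ha W
  rw [P.g_symm]
  linarith [h, h2, h3]

lemma nabla_Z1_Z1 (ha : P.Associated) (hnd : ∀ X : V, (∀ W, P.g X W = 0) → X = 0) :
    P.nabla P.Z₁ P.Z₁ = 0 := by
  apply hnd
  intro W
  have h := two_dα₁ P ha P.Z₁ W
  rw [P.dα₁_Z₁ W] at h
  have h2 : P.g P.Z₁ (P.nabla W P.Z₁) = 0 := by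
    have c := P.nabla_compat W P.Z₁ P.Z₁
    have e : P.g P.Z₁ P.Z₁ = 1 := by rw [gZ1 P ha, P.α₁_Z₁]
    rw [e, D_one, P.g_symm (P.nabla W P.Z₁) P.Z₁] at c
    linarith
  rw [P.g_symm]
  linarith

lemma nabla_Z2_Z2 (ha : P.Associated) (hnd : ∀ X : V, (∀ W, P.g X W = 0) → X = 0) :
    P.nabla P.Z₂ P.Z₂ = 0 := by
  apply hnd
  intro W
  have h := two_dα₂ P ha P.Z₂ W
  rw [P.dα₂_Z₂ W] at h
  have h2 : P.g P.Z₂ (P.nabla W P.Z₂) = 0 := by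
    have c := P.nabla_compat W P.Z₂ P.Z₂
    have e : P.g P.Z₂ P.Z₂ = 1 := by rw [gZ2 P ha, P.α₂_Z₂]
    rw [e, D_one, P.g_symm (P.nabla W P.Z₂) P.Z₂] at c
    linarith
  rw [P.g_symm]
  linarith

lemma α₁_br12 : P.α₁ (P.bracket P.Z₁ P.Z₂) = 0 := by
  have e := P.dα₁_eq P.Z₁ P.Z₂
  rw [P.dα₁_Z₁, P.α₁_Z₂, P.α₁_Z₁, D_zero, D_one] at e
  linarith

lemma α₂_br12 : P.α₂ (P.bracket P.Z₁ P.Z₂) = 0 := by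
  have e := P.dα₂_eq P.Z₁ P.Z₂
  rw [P.dα₂_Z₁, P.α₂_Z₂, P.α₂_Z₁, D_one, D_zero] at e
  linarith

lemma R_Z (hcurv : ∀ X Y : V, P.R X Y P.Z₁ = 0 ∧ P.R X Y P.Z₂ = 0) (X Y : V) :
    P.R X Y P.Z = 0 := by
  have h1 := (hcurv X Y).1
  have h2 := (hcurv X Y).2
  have hsplit : P.R X Y P.Z = P.R X Y P.Z₁ + P.R X Y P.Z₂ := by
    simp only [ContactPairData.R, ContactPairData.Z, P.nabla_add_right]
    abel
  rw [hsplit, h1, h2, add_zero]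

/-- The flatness relation `∇_Z (A X) = A(∇_Z X) - A(A X)`. -/
lemma spade (ha : P.Associated) (hnd : ∀ X : V, (∀ W, P.g X W = 0) → X = 0)
    (hcurv : ∀ X Y : V, P.R X Y P.Z₁ = 0 ∧ P.R X Y P.Z₂ = 0) (X : V) :
    P.nabla P.Z (A P X) = A P (P.nabla P.Z X) - A P (A P X) := by
  have h := R_Z P hcurv X P.Z
  rw [ContactPairData.R] at h
  have hb : P.bracket X P.Z = P.nabla X P.Z - P.nabla P.Z X := (P.nabla_torsion_free X P.Z).symm
  have hz : P.nabla P.Z P.Z = 0 := AZ_zero P ha hnd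
  rw [hb, hz, nabla_zero_right, nabla_sub_left] at h
  show P.nabla P.Z (P.nabla X P.Z) = P.nabla (P.nabla P.Z X) P.Z - P.nabla (P.nabla X P.Z) P.Z
  have key : P.nabla P.Z (P.nabla X P.Z)
        - (P.nabla (P.nabla P.Z X) P.Z - P.nabla (P.nabla X P.Z) P.Z)
      = -(0 - P.nabla P.Z (P.nabla X P.Z)
        - (P.nabla (P.nabla X P.Z) P.Z - P.nabla (P.nabla P.Z X) P.Z)) := by abel
  rw [h, neg_zero] at key
  exact sub_eq_zero.mp key

lemma φ_skew' (ha : P.Associated) (X Y : V) : P.g X (P.φ Y) = -P.g (P.φ X) Y := by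
  rw [φ_skew P ha]; ring

/-- `Q` is skew-symmetric. -/
lemma Q_skew (ha : P.Associated) (X Y : V) : P.g (Q P X) Y = -P.g X (Q P Y) := by
  have c1 := P.nabla_compat P.Z (P.φ X) Y
  have c2 := P.nabla_compat P.Z X (P.φ Y)
  have d : P.D P.Z (P.g (P.φ X) Y) = -P.D P.Z (P.g X (P.φ Y)) := by
    rw [φ_skew P ha, D_neg]
  have s2 : P.g (P.φ (P.nabla P.Z X)) Y = -P.g (P.nabla P.Z X) (P.φ Y) := φ_skew P ha _ _
  have s3 : P.g X (P.φ (P.nabla P.Z Y)) = -P.g (P.φ X) (P.nabla P.Z Y) := φ_skew' P ha _ _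
  unfold Q
  rw [g_sub_left, g_sub_right]
  linear_combination (-1:F)*c1 - c2 + d - s2 - s3

/-- `Sp` is symmetric. -/
lemma Sp_symm (ha : P.Associated) (X Y : V) : P.g (Sp P X) Y = P.g (Sp P Y) X := by
  have c1 := P.nabla_compat P.Z (S P X) Y
  have c2 := P.nabla_compat P.Z (S P Y) X
  have d : P.D P.Z (P.g (S P X) Y) = P.D P.Z (P.g (S P Y) X) :=
    congrArg (P.D P.Z) (S_symm P ha X Y)
  have s2 : P.g (S P (P.nabla P.Z X)) Y = P.g (S P Y) (P.nabla P.Z X) := S_symm P ha _ _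
  have s3 : P.g (S P (P.nabla P.Z Y)) X = P.g (S P X) (P.nabla P.Z Y) := S_symm P ha _ _
  unfold Sp
  rw [g_sub_left, g_sub_left]
  linear_combination (-1:F)*c1 + c2 + d - s2 + s3

end

end MCPAux

namespace MCPAux

section

variable {F V : Type*} [Field F] [LinearOrder F] [IsStrictOrderedRing F] [AddCommGroup V] [Module F V]
variable (P : ContactPairData F V)

lemma A_eq (X : V) : A P X = S P X - P.φ X := by unfold S; abel

lemma gext (hnd : ∀ X : V, (∀ W, P.g X W = 0) → X = 0) (X Y : V)
    (h : ∀ W, P.g X W = P.g Y W) : X = Y := by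
  have h0 : X - Y = 0 := hnd _ (fun W => by rw [g_sub_left, h W, sub_self])
  exact sub_eq_zero.mp h0

/-- flatness rewritten in terms of `S`, `φ`, `Q`, `Sp`. -/
lemma star (ha : P.Associated) (hnd : ∀ X : V, (∀ W, P.g X W = 0) → X = 0)
    (hcurv : ∀ X Y : V, P.R X Y P.Z₁ = 0 ∧ P.R X Y P.Z₂ = 0) (X : V) :
    Sp P X - Q P X = -S P (S P X) + S P (P.φ X) + P.φ (S P X) - P.φ (P.φ X) := by
  have h := spade P ha hnd hcurv X
  rw [show A P X = S P X - P.φ X from A_eq P X] at h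
  rw [A_sub, A_eq P (P.nabla P.Z X), A_eq P (S P X), A_eq P (P.φ X)] at h
  rw [nabla_sub_right] at h
  have h0 : (P.nabla P.Z (S P X) - P.nabla P.Z (P.φ X))
      - (S P (P.nabla P.Z X) - P.φ (P.nabla P.Z X)
        - (S P (S P X) - P.φ (S P X) - (S P (P.φ X) - P.φ (P.φ X)))) = 0 :=
    sub_eq_zero.mpr h
  have key : Sp P X - Q P X
      - (-S P (S P X) + S P (P.φ X) + P.φ (S P X) - P.φ (P.φ X))
      = (P.nabla P.Z (S P X) - P.nabla P.Z (P.φ X))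
      - (S P (P.nabla P.Z X) - P.φ (P.nabla P.Z X)
        - (S P (S P X) - P.φ (S P X) - (S P (P.φ X) - P.φ (P.φ X)))) := by
    unfold Sp Q; abel
  rw [h0] at key
  exact sub_eq_zero.mp key

/-- Identity (I): `Q = -(φS + Sφ)`, and Identity (II): `Sp = -S² - φ²`. -/
lemma I_II (ha : P.Associated) (hnd : ∀ X : V, (∀ W, P.g X W = 0) → X = 0)
    (hcurv : ∀ X Y : V, P.R X Y P.Z₁ = 0 ∧ P.R X Y P.Z₂ = 0) (X Y : V) :
    P.g (Q P X) Y = -P.g (P.φ (S P X)) Y - P.g (S P (P.φ X)) Y ∧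
    P.g (Sp P X) Y = -P.g (S P (S P X)) Y - P.g (P.φ (P.φ X)) Y := by
  have EX := congrArg (fun v => P.g v Y) (star P ha hnd hcurv X)
  have EY := congrArg (fun v => P.g v X) (star P ha hnd hcurv Y)
  simp only [g_sub_left, P.g_add_left, g_neg_left] at EX EY
  have r1 : P.g (Sp P Y) X = P.g (Sp P X) Y := Sp_symm P ha Y X
  have r2 : P.g (Q P Y) X = -P.g (Q P X) Y := by
    have := Q_skew P ha Y X
    rwa [P.g_symm Y (Q P X)] at this
  have r3 : P.g (S P (S P Y)) X = P.g (S P (S P X)) Y := by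
    rw [S_symm P ha (S P Y) X, S_symm P ha (S P X) Y, P.g_symm]
  have r4 : P.g (P.φ (P.φ Y)) X = P.g (P.φ (P.φ X)) Y := by
    rw [φ_skew P ha (P.φ Y) X, φ_skew P ha (P.φ X) Y, P.g_symm]
  have r5 : P.g (S P (P.φ Y)) X = -P.g (P.φ (S P X)) Y := by
    rw [S_symm P ha (P.φ Y) X, φ_skew' P ha (S P X) Y]
  have r6 : P.g (P.φ (S P Y)) X = -P.g (S P (P.φ X)) Y := by
    rw [φ_skew P ha (S P Y) X, S_symm P ha Y (P.φ X)]
  constructor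
  · linear_combination (-(1:F)/2)*EX + (1/2)*EY - (1/2)*r1 + (1/2)*r2
      - (1/2)*r3 - (1/2)*r4 + (1/2)*r5 + (1/2)*r6
  · linear_combination ((1:F)/2)*EX + (1/2)*EY - (1/2)*r1 + (1/2)*r2
      - (1/2)*r3 - (1/2)*r4 + (1/2)*r5 + (1/2)*r6

/-- (I) as a vector identity. -/
lemma Qv (ha : P.Associated) (hnd : ∀ X : V, (∀ W, P.g X W = 0) → X = 0)
    (hcurv : ∀ X Y : V, P.R X Y P.Z₁ = 0 ∧ P.R X Y P.Z₂ = 0) (X : V) :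
    Q P X = -(P.φ (S P X) + S P (P.φ X)) := by
  apply gext P hnd
  intro W
  rw [g_neg_left, P.g_add_left]
  have := (I_II P ha hnd hcurv X W).1
  linarith

/-- (II) as a vector identity. -/
lemma Spv (ha : P.Associated) (hnd : ∀ X : V, (∀ W, P.g X W = 0) → X = 0)
    (hcurv : ∀ X Y : V, P.R X Y P.Z₁ = 0 ∧ P.R X Y P.Z₂ = 0) (X : V) :
    Sp P X = -(S P (S P X)) - P.φ (P.φ X) := by
  apply gext P hnd
  intro W
  rw [g_sub_left, g_neg_left]
  have := (I_II P ha hnd hcurv X W).2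
  linarith

end

end MCPAux

namespace MCPAux

section

variable {F V : Type*} [Field F] [LinearOrder F] [IsStrictOrderedRing F] [AddCommGroup V] [Module F V]
variable (P : ContactPairData F V)

lemma nablaZZ2 : P.nabla P.Z P.Z₂ = P.nabla P.Z₁ P.Z₂ + P.nabla P.Z₂ P.Z₂ := by
  rw [ContactPairData.Z, P.nabla_add_left]

lemma SZ₂_eq : S P P.Z₂ = P.nabla P.Z₂ P.Z₁ + P.nabla P.Z₂ P.Z₂ := by
  unfold S A
  rw [ContactPairData.Z, P.nabla_add_right, P.φ_Z₂, add_zero]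

lemma br12_zero (ha : P.Associated) (hnd : ∀ X : V, (∀ W, P.g X W = 0) → X = 0)
    (hcurv : ∀ X Y : V, P.R X Y P.Z₁ = 0 ∧ P.R X Y P.Z₂ = 0) :
    P.bracket P.Z₁ P.Z₂ = 0 := by
  have h1 : Q P P.Z₂ = -P.φ (P.nabla P.Z P.Z₂) := by
    unfold Q; rw [P.φ_Z₂, nabla_zero_right, zero_sub]
  have h2 : Q P P.Z₂ = -P.φ (S P P.Z₂) := by
    rw [Qv P ha hnd hcurv P.Z₂, P.φ_Z₂, S_zero, add_zero]
  have h3 : P.φ (P.nabla P.Z P.Z₂ - S P P.Z₂) = 0 := by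
    have e : -P.φ (P.nabla P.Z P.Z₂) = -P.φ (S P P.Z₂) := by rw [← h1, h2]
    rw [φ_sub, neg_inj.mp e, sub_self]
  have h4 : P.nabla P.Z P.Z₂ - S P P.Z₂ = P.bracket P.Z₁ P.Z₂ := by
    rw [nablaZZ2, SZ₂_eq, ← P.nabla_torsion_free P.Z₁ P.Z₂]
    abel
  rw [h4] at h3
  have h5 := vert P ha _ h3
  rwa [α₁_br12, α₂_br12, zero_smul, zero_smul, add_zero] at h5

lemma SZ₂_zero (ha : P.Associated) (hnd : ∀ X : V, (∀ W, P.g X W = 0) → X = 0)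
    (hcurv : ∀ X Y : V, P.R X Y P.Z₁ = 0 ∧ P.R X Y P.Z₂ = 0) :
    S P P.Z₂ = 0 := by
  have e1 : S P P.Z₂ = P.nabla P.Z₂ P.Z₁ := by
    rw [SZ₂_eq, nabla_Z2_Z2 P ha hnd, add_zero]
  have e2 : P.nabla P.Z₂ P.Z₁ = P.nabla P.Z₁ P.Z₂ := by
    have := P.nabla_torsion_free P.Z₁ P.Z₂
    rw [br12_zero P ha hnd hcurv] at this
    have h := sub_eq_zero.mp this
    exact h.symm
  have e3 : P.nabla P.Z₁ P.Z₂ = S P P.Z₁ := by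
    have : P.nabla P.Z₁ P.Z₂ = A P P.Z₁ - P.nabla P.Z₁ P.Z₁ := by
      unfold A
      rw [ContactPairData.Z, P.nabla_add_right]
      abel
    rw [this, nabla_Z1_Z1 P ha hnd, sub_zero, A_eq, P.φ_Z₁, sub_zero]
  have e4 : S P P.Z₁ + S P P.Z₂ = 0 := by
    rw [← S_add]
    show S P P.Z = 0
    rw [show S P P.Z = A P P.Z + P.φ P.Z from rfl, AZ_zero P ha hnd, φZ P, add_zero]
  have e5 : S P P.Z₂ + S P P.Z₂ = 0 := by
    nth_rewrite 1 [e1, e2, e3]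
    exact e4
  have e6 : (2:F) • S P P.Z₂ = 0 := by rw [two_smul]; exact e5
  calc S P P.Z₂ = ((1:F)/2 * 2) • S P P.Z₂ := by norm_num
  _ = ((1:F)/2) • ((2:F) • S P P.Z₂) := by rw [mul_smul]
  _ = 0 := by rw [e6, smul_zero]

lemma SZ₁_zero (ha : P.Associated) (hnd : ∀ X : V, (∀ W, P.g X W = 0) → X = 0)
    (hcurv : ∀ X Y : V, P.R X Y P.Z₁ = 0 ∧ P.R X Y P.Z₂ = 0) :
    S P P.Z₁ = 0 := by
  have e4 : S P P.Z₁ + S P P.Z₂ = 0 := by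
    rw [← S_add]
    show S P P.Z = 0
    rw [show S P P.Z = A P P.Z + P.φ P.Z from rfl, AZ_zero P ha hnd, φZ P, add_zero]
  rw [SZ₂_zero P ha hnd hcurv, add_zero] at e4
  exact e4

lemma gSZ1 (ha : P.Associated) (hnd : ∀ X : V, (∀ W, P.g X W = 0) → X = 0)
    (hcurv : ∀ X Y : V, P.R X Y P.Z₁ = 0 ∧ P.R X Y P.Z₂ = 0) (X : V) :
    P.g (S P X) P.Z₁ = 0 := by
  rw [S_symm P ha X P.Z₁, SZ₁_zero P ha hnd hcurv, g_zero_left]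

lemma gSZ2 (ha : P.Associated) (hnd : ∀ X : V, (∀ W, P.g X W = 0) → X = 0)
    (hcurv : ∀ X Y : V, P.R X Y P.Z₁ = 0 ∧ P.R X Y P.Z₂ = 0) (X : V) :
    P.g (S P X) P.Z₂ = 0 := by
  rw [S_symm P ha X P.Z₂, SZ₂_zero P ha hnd hcurv, g_zero_left]

lemma gAbZ1 (ha : P.Associated) (hnd : ∀ X : V, (∀ W, P.g X W = 0) → X = 0)
    (hcurv : ∀ X Y : V, P.R X Y P.Z₁ = 0 ∧ P.R X Y P.Z₂ = 0) (X : V) :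
    P.g (A P X) P.Z₁ = 0 := by
  rw [A_eq, g_sub_left, gSZ1 P ha hnd hcurv, gφZ1 P ha, sub_zero]

lemma gAbZ2 (ha : P.Associated) (hnd : ∀ X : V, (∀ W, P.g X W = 0) → X = 0)
    (hcurv : ∀ X Y : V, P.R X Y P.Z₁ = 0 ∧ P.R X Y P.Z₂ = 0) (X : V) :
    P.g (A P X) P.Z₂ = 0 := by
  rw [A_eq, g_sub_left, gSZ2 P ha hnd hcurv, gφZ2 P ha, sub_zero]

lemma nablaZ_Z1 (ha : P.Associated) (hnd : ∀ X : V, (∀ W, P.g X W = 0) → X = 0)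
    (hcurv : ∀ X Y : V, P.R X Y P.Z₁ = 0 ∧ P.R X Y P.Z₂ = 0) :
    P.nabla P.Z P.Z₁ = 0 := by
  have e2 : P.nabla P.Z₂ P.Z₁ = S P P.Z₂ := by
    rw [SZ₂_eq, nabla_Z2_Z2 P ha hnd, add_zero]
  calc P.nabla P.Z P.Z₁ = P.nabla P.Z₁ P.Z₁ + P.nabla P.Z₂ P.Z₁ := by
        rw [ContactPairData.Z, P.nabla_add_left]
  _ = 0 := by rw [nabla_Z1_Z1 P ha hnd, e2, SZ₂_zero P ha hnd hcurv, add_zero]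

lemma nablaZ_Z2 (ha : P.Associated) (hnd : ∀ X : V, (∀ W, P.g X W = 0) → X = 0)
    (hcurv : ∀ X Y : V, P.R X Y P.Z₁ = 0 ∧ P.R X Y P.Z₂ = 0) :
    P.nabla P.Z P.Z₂ = 0 := by
  have h4 : P.nabla P.Z P.Z₂ - S P P.Z₂ = P.bracket P.Z₁ P.Z₂ := by
    rw [nablaZZ2, SZ₂_eq, ← P.nabla_torsion_free P.Z₁ P.Z₂]
    abel
  rw [br12_zero P ha hnd hcurv, SZ₂_zero P ha hnd hcurv, sub_zero] at h4
  exact h4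

/-- brackets of `Z` with `φ`-images have no vertical components -/
lemma g_brφ_Z1 (ha : P.Associated) (hnd : ∀ X : V, (∀ W, P.g X W = 0) → X = 0)
    (hcurv : ∀ X Y : V, P.R X Y P.Z₁ = 0 ∧ P.R X Y P.Z₂ = 0) (U : V) :
    P.g (P.bracket P.Z (P.φ U)) P.Z₁ = 0 := by
  have hb : P.bracket P.Z (P.φ U) = P.nabla P.Z (P.φ U) - A P (P.φ U) :=
    (P.nabla_torsion_free P.Z (P.φ U)).symm
  have c := P.nabla_compat P.Z (P.φ U) P.Z₁
  rw [gφZ1 P ha, D_zero, nablaZ_Z1 P ha hnd hcurv, g_zero_right, add_zero] at c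
  rw [hb, g_sub_left, ← c, gAbZ1 P ha hnd hcurv, sub_zero]

lemma g_brφ_Z2 (ha : P.Associated) (hnd : ∀ X : V, (∀ W, P.g X W = 0) → X = 0)
    (hcurv : ∀ X Y : V, P.R X Y P.Z₁ = 0 ∧ P.R X Y P.Z₂ = 0) (U : V) :
    P.g (P.bracket P.Z (P.φ U)) P.Z₂ = 0 := by
  have hb : P.bracket P.Z (P.φ U) = P.nabla P.Z (P.φ U) - A P (P.φ U) :=
    (P.nabla_torsion_free P.Z (P.φ U)).symm
  have c := P.nabla_compat P.Z (P.φ U) P.Z₂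
  rw [gφZ2 P ha, D_zero, nablaZ_Z2 P ha hnd hcurv, g_zero_right, add_zero] at c
  rw [hb, g_sub_left, ← c, gAbZ2 P ha hnd hcurv, sub_zero]

end

end MCPAux

namespace MCPAux

section

variable {F V : Type*} [Field F] [LinearOrder F] [IsStrictOrderedRing F] [AddCommGroup V] [Module F V]
variable (P : ContactPairData F V)

lemma half_cancel (x y : V) (h : (2:F) • x = (2:F) • y) : x = y := by
  calc x = ((2:F)⁻¹ * 2) • x := by norm_num
  _ = (2:F)⁻¹ • ((2:F) • x) := by rw [mul_smul]
  _ = (2:F)⁻¹ • ((2:F) • y) := by rw [h]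
  _ = ((2:F)⁻¹ * 2) • y := by rw [mul_smul]
  _ = y := by norm_num

lemma nabla_Z_eq (X : V) : P.nabla X P.Z = S P X - P.φ X := A_eq P X

/-- The Lie derivative of `Φ = g(·, φ·)` along `Z` vanishes. -/
lemma LZPhi (ha : P.Associated) (hnd : ∀ X : V, (∀ W, P.g X W = 0) → X = 0)
    (hcurv : ∀ X Y : V, P.R X Y P.Z₁ = 0 ∧ P.R X Y P.Z₂ = 0) (U W : V) :
    P.D P.Z (P.g U (P.φ W)) =
      P.g (P.bracket P.Z U) (P.φ W) + P.g U (P.φ (P.bracket P.Z W)) := by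
  have c := P.nabla_compat P.Z U (P.φ W)
  have qv := Qv P ha hnd hcurv W
  have qw : P.nabla P.Z (P.φ W)
      = -(P.φ (S P W) + S P (P.φ W)) + P.φ (P.nabla P.Z W) := by
    have h0 : Q P W = P.nabla P.Z (P.φ W) - P.φ (P.nabla P.Z W) := rfl
    rw [h0] at qv
    exact eq_add_of_sub_eq qv
  have qg := congrArg (P.g U) qw
  simp only [g_add_right, g_neg_right] at qg
  have s1 : P.g U (S P (P.φ W)) = P.g (S P U) (P.φ W) := by
    rw [P.g_symm]; exact S_symm P ha (P.φ W) U
  have s2 : P.g U (P.φ (P.φ W)) = -P.g (P.φ U) (P.φ W) := φ_skew' P ha U (P.φ W)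
  have aU : P.nabla U P.Z = S P U - P.φ U := A_eq P U
  have aW : P.nabla W P.Z = S P W - P.φ W := A_eq P W
  rw [← P.nabla_torsion_free P.Z U, ← P.nabla_torsion_free P.Z W]
  rw [aU, aW, φ_sub, g_sub_left, g_sub_right, g_sub_left, φ_sub, g_sub_right]
  linear_combination c + qg - s1 - s2

lemma hh2 (ha : P.Associated) (X W : V) :
    2 * P.g (P.hh X) W
      = P.g (P.bracket P.Z (P.φ X)) W + P.g (P.bracket P.Z X) (P.φ W) := by
  have h0 : P.hh X = (1/2 : F) • (P.bracket P.Z (P.φ X) - P.φ (P.bracket P.Z X)) := rfl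
  rw [h0, P.g_smul_left, g_sub_left]
  have s : P.g (P.φ (P.bracket P.Z X)) W = -P.g (P.bracket P.Z X) (P.φ W) :=
    φ_skew P ha _ _
  rw [s]
  ring

/-- `ĥ` is symmetric. -/
lemma hh_symm (ha : P.Associated) (hnd : ∀ X : V, (∀ W, P.g X W = 0) → X = 0)
    (hcurv : ∀ X Y : V, P.R X Y P.Z₁ = 0 ∧ P.R X Y P.Z₂ = 0) (X Y : V) :
    P.g (P.hh X) Y = P.g (P.hh Y) X := by
  have t1 := hh2 P ha X Y
  have t2 := hh2 P ha Y X
  -- E6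
  have E6 := LZPhi P ha hnd hcurv Y X
  -- E5''
  have e := LZPhi P ha hnd hcurv (P.φ X) (P.φ Y)
  have l1 : P.g (P.φ X) (P.φ (P.φ Y)) = -P.g (P.φ X) Y := by
    rw [g_phiphi_right P (P.φ X) Y, gφZ1 P ha, gφZ2 P ha, mul_zero, mul_zero,
      add_zero, add_zero]
  rw [l1, D_neg] at e
  have l2 : P.g (P.bracket P.Z (P.φ X)) (P.φ (P.φ Y)) =
      -P.g (P.bracket P.Z (P.φ X)) Y := by
    rw [g_phiphi_right P _ Y, g_brφ_Z1 P ha hnd hcurv, g_brφ_Z2 P ha hnd hcurv,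
      mul_zero, mul_zero, add_zero, add_zero]
  have l3 : P.g (P.φ X) (P.φ (P.bracket P.Z (P.φ Y))) =
      P.g X (P.bracket P.Z (P.φ Y)) := by
    rw [φ_skew' P ha (P.φ X) (P.bracket P.Z (P.φ Y)),
      g_phiphi_left P (P.bracket P.Z (P.φ Y)) X]
    rw [P.g_symm P.Z₁ (P.bracket P.Z (P.φ Y)), P.g_symm P.Z₂ (P.bracket P.Z (P.φ Y)),
      g_brφ_Z1 P ha hnd hcurv, g_brφ_Z2 P ha hnd hcurv, mul_zero, mul_zero,
      add_zero, add_zero, neg_neg]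
  rw [l2, l3] at e
  -- auxiliary symmetries
  have m1 : P.g X (P.bracket P.Z (P.φ Y)) = P.g (P.bracket P.Z (P.φ Y)) X := P.g_symm _ _
  have m2 : P.g Y (P.φ (P.bracket P.Z X)) = -P.g (P.bracket P.Z X) (P.φ Y) := by
    rw [φ_skew' P ha Y (P.bracket P.Z X), P.g_symm]
  have m3 : P.D P.Z (P.g (P.φ X) Y) = P.D P.Z (P.g Y (P.φ X)) :=
    congrArg (P.D P.Z) (P.g_symm _ _)
  linarith [t1, t2, E6, e, m1, m2, m3]

/-- `∇_Z φ = 0`. -/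
lemma Q_zero (ha : P.Associated) (hnd : ∀ X : V, (∀ W, P.g X W = 0) → X = 0)
    (hcurv : ∀ X Y : V, P.R X Y P.Z₁ = 0 ∧ P.R X Y P.Z₂ = 0) (X : V) :
    Q P X = 0 := by
  have hhb : ∀ Y : V, (2:F) • P.hh Y = Q P Y + P.φ (S P Y) - S P (P.φ Y) := by
    intro Y
    have h0 : P.hh Y = (1/2 : F) • (P.bracket P.Z (P.φ Y) - P.φ (P.bracket P.Z Y)) := rfl
    rw [h0, smul_smul]
    have h1 : (2:F) * (1/2) = 1 := by norm_num
    rw [h1, one_smul]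
    rw [← P.nabla_torsion_free P.Z (P.φ Y), ← P.nabla_torsion_free P.Z Y]
    rw [nabla_Z_eq P (P.φ Y), nabla_Z_eq P Y, φ_sub, φ_sub]
    unfold Q
    abel
  apply hnd
  intro W
  have pX := congrArg (fun v => P.g v W) (hhb X)
  have pW := congrArg (fun v => P.g v X) (hhb W)
  simp only [g_sub_left, P.g_add_left, P.g_smul_left] at pX pW
  have hs := hh_symm P ha hnd hcurv X W
  have qs : P.g (Q P W) X = -P.g (Q P X) W := by
    have := Q_skew P ha W X
    rwa [P.g_symm W (Q P X)] at this
  have r5 : P.g (S P (P.φ W)) X = -P.g (P.φ (S P X)) W := by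
    rw [S_symm P ha (P.φ W) X, φ_skew' P ha (S P X) W]
  have r6 : P.g (P.φ (S P W)) X = -P.g (S P (P.φ X)) W := by
    rw [φ_skew P ha (S P W) X, S_symm P ha W (P.φ X)]
  linarith [pX, pW, hs, qs, r5, r6]

lemma phiS (ha : P.Associated) (hnd : ∀ X : V, (∀ W, P.g X W = 0) → X = 0)
    (hcurv : ∀ X Y : V, P.R X Y P.Z₁ = 0 ∧ P.R X Y P.Z₂ = 0) (X : V) :
    P.φ (S P X) = -S P (P.φ X) := by
  have h := Qv P ha hnd hcurv X
  rw [Q_zero P ha hnd hcurv X] at h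
  have h2 : P.φ (S P X) + S P (P.φ X) = 0 := neg_eq_zero.mp h.symm
  exact eq_neg_of_add_eq_zero_left h2

lemma phiSphi (ha : P.Associated) (hnd : ∀ X : V, (∀ W, P.g X W = 0) → X = 0)
    (hcurv : ∀ X Y : V, P.R X Y P.Z₁ = 0 ∧ P.R X Y P.Z₂ = 0) (X : V) :
    P.φ (S P (P.φ X)) = S P X := by
  have h := phiS P ha hnd hcurv (P.φ X)
  rw [P.φ_sq X] at h
  rw [S_add, S_add, S_neg, S_smul, S_smul, SZ₁_zero P ha hnd hcurv,
    SZ₂_zero P ha hnd hcurv, smul_zero, smul_zero, add_zero, add_zero, neg_neg] at h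
  exact h

lemma nablaZφ (ha : P.Associated) (hnd : ∀ X : V, (∀ W, P.g X W = 0) → X = 0)
    (hcurv : ∀ X Y : V, P.R X Y P.Z₁ = 0 ∧ P.R X Y P.Z₂ = 0) (U : V) :
    P.nabla P.Z (P.φ U) = P.φ (P.nabla P.Z U) := by
  have h := Q_zero P ha hnd hcurv U
  have h0 : Q P U = P.nabla P.Z (P.φ U) - P.φ (P.nabla P.Z U) := rfl
  rw [h0] at h
  exact sub_eq_zero.mp h

lemma Sp_conj (ha : P.Associated) (hnd : ∀ X : V, (∀ W, P.g X W = 0) → X = 0)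
    (hcurv : ∀ X Y : V, P.R X Y P.Z₁ = 0 ∧ P.R X Y P.Z₂ = 0) (X : V) :
    Sp P X = P.φ (Sp P (P.φ X)) := by
  have h0 : Sp P (P.φ X)
      = P.nabla P.Z (S P (P.φ X)) - S P (P.nabla P.Z (P.φ X)) := rfl
  rw [h0, φ_sub]
  have e1 : P.φ (P.nabla P.Z (S P (P.φ X))) = P.nabla P.Z (S P X) := by
    rw [← nablaZφ P ha hnd hcurv (S P (P.φ X)), phiSphi P ha hnd hcurv X]
  have e2 : P.φ (S P (P.nabla P.Z (P.φ X))) = S P (P.nabla P.Z X) := by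
    rw [nablaZφ P ha hnd hcurv X, phiSphi P ha hnd hcurv (P.nabla P.Z X)]
  rw [e1, e2]
  rfl

lemma phi4 (ha : P.Associated) (X : V) :
    P.φ (P.φ (P.φ (P.φ X))) = -P.φ (P.φ X) := by
  rw [P.φ_sq (P.φ (P.φ X)), α₁φ P ha, α₂φ P ha, zero_smul, zero_smul,
    add_zero, add_zero]

lemma S2 (ha : P.Associated) (hnd : ∀ X : V, (∀ W, P.g X W = 0) → X = 0)
    (hcurv : ∀ X Y : V, P.R X Y P.Z₁ = 0 ∧ P.R X Y P.Z₂ = 0) (X : V) :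
    S P (S P X) = -P.φ (P.φ X) := by
  have h1 := Spv P ha hnd hcurv X
  have h2 := Sp_conj P ha hnd hcurv X
  rw [Spv P ha hnd hcurv (P.φ X)] at h2
  rw [φ_sub, φ_neg] at h2
  have e1 : P.φ (S P (S P (P.φ X))) = -S P (S P X) := by
    rw [phiS P ha hnd hcurv (S P (P.φ X)), phiSphi P ha hnd hcurv X]
  have e2 : P.φ (P.φ (P.φ (P.φ X))) = -P.φ (P.φ X) := phi4 P ha X
  rw [e1, e2] at h2
  rw [sub_neg_eq_add, neg_neg] at h2
  -- h2 : Sp X = S S X + φφX ; h1 : Sp X = -S S X - φφX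
  have h5 := h1.symm.trans h2
  have hsum : (S P (S P X) + P.φ (P.φ X)) + (S P (S P X) + P.φ (P.φ X)) = 0 := by
    calc (S P (S P X) + P.φ (P.φ X)) + (S P (S P X) + P.φ (P.φ X))
        = (S P (S P X) + P.φ (P.φ X)) - (-S P (S P X) - P.φ (P.φ X)) := by abel
    _ = (S P (S P X) + P.φ (P.φ X)) - (S P (S P X) + P.φ (P.φ X)) := by rw [h5]
    _ = 0 := sub_self _
  have h3 : (2:F) • (S P (S P X) + P.φ (P.φ X)) = (2:F) • (0:V) := by
    rw [smul_zero, two_smul]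
    exact hsum
  have h6 := half_cancel _ _ h3
  exact eq_neg_of_add_eq_zero_left h6

lemma hh_eq (ha : P.Associated) (hnd : ∀ X : V, (∀ W, P.g X W = 0) → X = 0)
    (hcurv : ∀ X Y : V, P.R X Y P.Z₁ = 0 ∧ P.R X Y P.Z₂ = 0) (X : V) :
    P.hh X = -S P (P.φ X) := by
  have hhb : (2:F) • P.hh X = Q P X + P.φ (S P X) - S P (P.φ X) := by
    have h0 : P.hh X = (1/2 : F) • (P.bracket P.Z (P.φ X) - P.φ (P.bracket P.Z X)) := rfl
    rw [h0, smul_smul]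
    have h1 : (2:F) * (1/2) = 1 := by norm_num
    rw [h1, one_smul]
    rw [← P.nabla_torsion_free P.Z (P.φ X), ← P.nabla_torsion_free P.Z X]
    rw [nabla_Z_eq P (P.φ X), nabla_Z_eq P X, φ_sub, φ_sub]
    unfold Q
    abel
  rw [Q_zero P ha hnd hcurv X, phiS P ha hnd hcurv X, zero_add] at hhb
  have h2 : (2:F) • P.hh X = (2:F) • (-S P (P.φ X)) := by
    rw [hhb, two_smul]; abel
  exact half_cancel _ _ h2

lemma main_sq (ha : P.Associated) (hnd : ∀ X : V, (∀ W, P.g X W = 0) → X = 0)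
    (hcurv : ∀ X Y : V, P.R X Y P.Z₁ = 0 ∧ P.R X Y P.Z₂ = 0) (X : V) :
    P.hh (P.hh X) = -(P.φ (P.φ X)) := by
  rw [hh_eq P ha hnd hcurv, hh_eq P ha hnd hcurv X, φ_neg, S_neg, neg_neg,
    phiSphi P ha hnd hcurv X, S2 P ha hnd hcurv X]

lemma hh_smul (ha : P.Associated) (hnd : ∀ X : V, (∀ W, P.g X W = 0) → X = 0)
    (hcurv : ∀ X Y : V, P.R X Y P.Z₁ = 0 ∧ P.R X Y P.Z₂ = 0) (c : F) (v : V) :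
    P.hh (c • v) = c • P.hh v := by
  rw [hh_eq P ha hnd hcurv, hh_eq P ha hnd hcurv, P.φ_smul, S_smul, smul_neg]

end

end MCPAux

/-- For a metric contact pair of type `(h, k)` with decomposable `φ` on a
`(2h+2k+2)`-dimensional manifold (encoded by an orthonormal frame) whose curvature
vanishes on the vertical subbundle, the tensor `ĥ = (1/2)ℒ_{Z₁+Z₂}φ` satisfies
`ĥ² = -φ²`, every nonzero eigenvalue of `ĥ` is `±1`, and
`rank ĥ = rank φ = 2h + 2k` (expressed through `ker ĥ = ker φ = ℝZ₁ ⊕ ℝZ₂`,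
the frame fixing the dimension `2h + 2k + 2`). -/
theorem statement_18 {F V : Type*} [Field F] [LinearOrder F] [IsStrictOrderedRing F] [AddCommGroup V] [Module F V]
    (P : ContactPairData F V) (ha : P.Associated) (hd : P.Decomposable)
    (h k : ℕ) (e : Fin (2 * h + 2 * k) → V)
    (he_on : ∀ i j, P.g (e i) (e j) = if i = j then 1 else 0)
    (he_Z : ∀ i, P.g (e i) P.Z₁ = 0 ∧ P.g (e i) P.Z₂ = 0)
    (hexp : ∀ X : V, X = P.g X P.Z₁ • P.Z₁ + P.g X P.Z₂ • P.Z₂ +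
      ∑ i, P.g X (e i) • e i)
    (hcurv : ∀ X Y, P.R X Y P.Z₁ = 0 ∧ P.R X Y P.Z₂ = 0) :
    (∀ X, P.hh (P.hh X) = -(P.φ (P.φ X))) ∧
    (∀ (c : F) (v : V), v ≠ 0 → P.hh v = c • v → c ≠ 0 → c = 1 ∨ c = -1) ∧
    (∀ X, P.hh X = 0 ↔ P.φ X = 0) ∧
    (∀ X, P.φ X = 0 ↔ ∃ a b : F, X = a • P.Z₁ + b • P.Z₂) := by
  have hnd : ∀ X : V, (∀ W, P.g X W = 0) → X = 0 := by
    intro X hX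
    have hx := hexp X
    simp only [hX, zero_smul, add_zero, zero_add, Finset.sum_const_zero] at hx
    exact hx
  have vert2 : ∀ X : V, P.φ (P.φ X) = 0 → X = P.α₁ X • P.Z₁ + P.α₂ X • P.Z₂ := by
    intro X h2
    have h3 := (P.φ_sq X).symm.trans h2
    have h4 : P.α₁ X • P.Z₁ + P.α₂ X • P.Z₂ - X = 0 := by
      rw [← h3]; abel
    exact (sub_eq_zero.mp h4).symm
  have φvert : ∀ a b : F, P.φ (a • P.Z₁ + b • P.Z₂) = 0 := by
    intro a b
    rw [P.φ_add, P.φ_smul, P.φ_smul, P.φ_Z₁, P.φ_Z₂, smul_zero, smul_zero, add_zero]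
  refine ⟨fun X => MCPAux.main_sq P ha hnd hcurv X, ?_, ?_, ?_⟩
  · -- eigenvalues
    intro c v hv hev hc0
    have h1 : P.hh (P.hh v) = (c * c) • v := by
      rw [hev, MCPAux.hh_smul P ha hnd hcurv, hev, smul_smul]
    have h2 : (c * c) • v = -(P.φ (P.φ v)) :=
      h1.symm.trans (MCPAux.main_sq P ha hnd hcurv v)
    rw [P.φ_sq v] at h2
    -- kill the vertical components
    have a1 : (c * c) * P.α₁ v = 0 := by
      have := congrArg P.α₁ h2
      rw [P.α₁_smul, MCPAux.α₁_neg, P.α₁_add, P.α₁_add, MCPAux.α₁_neg,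
        P.α₁_smul, P.α₁_smul, P.α₁_Z₁, P.α₁_Z₂] at this
      rw [this]; ring
    have a2 : (c * c) * P.α₂ v = 0 := by
      have := congrArg P.α₂ h2
      rw [P.α₂_smul, MCPAux.α₂_neg, P.α₂_add, P.α₂_add, MCPAux.α₂_neg,
        P.α₂_smul, P.α₂_smul, P.α₂_Z₁, P.α₂_Z₂] at this
      rw [this]; ring
    have hcc : c * c ≠ 0 := mul_ne_zero hc0 hc0
    have hα1 : P.α₁ v = 0 := by
      rcases mul_eq_zero.mp a1 with h' | h'
      · exact absurd h' hcc
      · exact h'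
    have hα2 : P.α₂ v = 0 := by
      rcases mul_eq_zero.mp a2 with h' | h'
      · exact absurd h' hcc
      · exact h'
    rw [hα1, hα2, zero_smul, zero_smul, add_zero, add_zero, neg_neg] at h2
    have h3 : (c * c - 1) • v = 0 := by
      rw [sub_smul, one_smul, h2, sub_self]
    have hone : c * c = 1 := by
      by_contra hne
      have hne' : c * c - 1 ≠ 0 := sub_ne_zero.mpr hne
      have : v = 0 := by
        calc v = ((c * c - 1)⁻¹ * (c * c - 1)) • v := by
              rw [inv_mul_cancel₀ hne', one_smul]
        _ = (c * c - 1)⁻¹ • ((c * c - 1) • v) := by rw [mul_smul]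
        _ = 0 := by rw [h3, smul_zero]
      exact hv this
    exact mul_self_eq_one_iff.mp hone
  · -- kernels agree
    intro X
    constructor
    · intro h0
      have h2 := MCPAux.main_sq P ha hnd hcurv X
      rw [h0] at h2
      have hz : P.hh (0 : V) = 0 := by
        rw [MCPAux.hh_eq P ha hnd hcurv, MCPAux.φ_zero, MCPAux.S_zero, neg_zero]
      rw [hz] at h2
      have h3 : P.φ (P.φ X) = 0 := by
        rw [← neg_eq_zero, ← h2]
      have h4 := vert2 X h3
      calc P.φ X = P.φ (P.α₁ X • P.Z₁ + P.α₂ X • P.Z₂) := by rw [← h4]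
      _ = 0 := φvert _ _
    · intro h0
      rw [MCPAux.hh_eq P ha hnd hcurv, h0, MCPAux.S_zero, neg_zero]
  · -- kernel of φ is the vertical subbundle
    intro X
    constructor
    · intro h0
      refine ⟨P.α₁ X, P.α₂ X, ?_⟩
      exact MCPAux.vert P ha X h0
    · rintro ⟨a, b, rfl⟩
      exact φvert a b
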